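/- Let C(G) be the full cone over a finite graph G with cone point p, and let f be a function on C(G) with f(p) = 0. Then ΔᶜΓ₁ᶜ(f)(p) = Σ_{y ∈ V} Γ₁(f)(y) - ((|V| - 1)/2) Σ_{y ∈ V} f(y)². -/

import Mathlib

open Finset

variable {V : Type*}

noncomputable def lap (G : SimpleGraph V) [∀ v, Fintype (G.neighborSet v)] (f : V → ℝ) (x : V) : ℝ :=
  ∑ y ∈ G.neighborFinset x, (f y - f x)

noncomputable def gam (G : SimpleGraph V) [∀ v, Fintype (G.neighborSet v)] (f g : V → ℝ) (x : V) : ℝ :=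
  (1/2) * ∑ y ∈ G.neighborFinset x, (f y - f x) * (g y - g x)

noncomputable def gam1 (G : SimpleGraph V) [∀ v, Fintype (G.neighborSet v)] (f : V → ℝ) (x : V) : ℝ :=
  (1/2) * ∑ y ∈ G.neighborFinset x, (f y - f x)^2

noncomputable def gam2 (G : SimpleGraph V) [∀ v, Fintype (G.neighborSet v)] (f : V → ℝ) (x : V) : ℝ :=
  (1/2) * (lap G (gam1 G f) x - 2 * gam G f (lap G f) x)

def cone (G : SimpleGraph V) : SimpleGraph (Option V) where
  Adj a b := a ≠ b ∧ ∀ x ∈ a, ∀ y ∈ b, G.Adj x y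
  symm := ⟨fun _ _ h => ⟨h.1.symm, fun x hx y hy => (h.2 y hy x hx).symm⟩⟩
  loopless := ⟨fun _ h => h.1 rfl⟩

instance (G : SimpleGraph V) [DecidableEq V] [DecidableRel G.Adj] :
    DecidableRel (cone G).Adj := fun a b =>
  inferInstanceAs (Decidable (a ≠ b ∧ ∀ x ∈ a, ∀ y ∈ b, G.Adj x y))


lemma cone_adj (G : SimpleGraph V) (a b : Option V) :
    (cone G).Adj a b ↔ a ≠ b ∧ ∀ x ∈ a, ∀ y ∈ b, G.Adj x y := Iff.rfl

lemma cone_neighborFinset_none (G : SimpleGraph V) [Fintype V] [DecidableEq V]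
    [DecidableRel G.Adj] :
    (cone G).neighborFinset none = Finset.univ.map Function.Embedding.some := by
  ext y
  cases y <;> simp [SimpleGraph.mem_neighborFinset, cone_adj, Option.mem_def]

lemma cone_neighborFinset_some (G : SimpleGraph V) [Fintype V] [DecidableEq V]
    [DecidableRel G.Adj] (v : V) :
    (cone G).neighborFinset (some v)
      = insert none ((G.neighborFinset v).map Function.Embedding.some) := by
  ext y
  cases y with
  | none => simp [SimpleGraph.mem_neighborFinset, cone_adj, Option.mem_def]
  | some u =>
    simp only [SimpleGraph.mem_neighborFinset, cone_adj, Option.mem_def, Finset.mem_insert,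
      Finset.mem_map, Function.Embedding.some_apply, Option.some.injEq]
    constructor
    · rintro ⟨-, h⟩
      exact Or.inr ⟨u, h v rfl u rfl, rfl⟩
    · rintro (h | ⟨w, hw, rfl⟩)
      · exact absurd h (by simp)
      · refine ⟨by simpa using hw.ne, ?_⟩
        rintro x rfl y rfl
        exact hw

lemma cone_gam1_none {G : SimpleGraph V} [Fintype V] [DecidableEq V] [DecidableRel G.Adj]
    {f : Option V → ℝ} (hf : f none = 0) :
    gam1 (cone G) f none = (1/2) * ∑ y : V, (f (some y))^2 := by
  rw [gam1, cone_neighborFinset_none, Finset.sum_map]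
  simp [hf]

lemma cone_gam1_some {G : SimpleGraph V} [Fintype V] [DecidableEq V] [DecidableRel G.Adj]
    {f : Option V → ℝ} (hf : f none = 0) (v : V) :
    gam1 (cone G) f (some v)
      = gam1 G (fun z => f (some z)) v + (1/2) * (f (some v))^2 := by
  rw [gam1, cone_neighborFinset_some, Finset.sum_insert (by simp), Finset.sum_map, gam1]
  simp only [Function.Embedding.some_apply, hf]
  ring

theorem stmt5 (G : SimpleGraph V) [Fintype V] [DecidableEq V] [DecidableRel G.Adj]
    (f : Option V → ℝ) (hf : f none = 0) :
    lap (cone G) (gam1 (cone G) f) none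
      = ∑ y : V, gam1 G (fun z => f (some z)) y
        - ((Fintype.card V : ℝ) - 1) / 2 * ∑ y : V, (f (some y))^2 := by
  rw [lap, cone_neighborFinset_none, Finset.sum_map]
  simp only [Function.Embedding.some_apply, cone_gam1_none hf, cone_gam1_some hf]
  rw [Finset.sum_sub_distrib, Finset.sum_add_distrib, ← Finset.mul_sum, Finset.sum_const,
    nsmul_eq_mul, Finset.card_univ]
  ring
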